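/- Let S be the clone of self-dual Boolean functions. For Boolean functions f, g define Im^[2](f) = { {f(a), f(ā)} : a in the domain of f }, where ā denotes the componentwise complement. Then f ≤_S g if and only if Im^[2](f) ⊆ Im^[2](g), and there are exactly 7 S-equivalence classes. -/

import Mathlib

/-- An `n`-indexed operation on `A` has arity `n + 1` (so arities are ≥ 1). -/
abbrev Op (A : Type) (n : ℕ) := (Fin (n + 1) → A) → A

/-- A clone on `A`: a set of finitary operations containing all projections
and closed under composition. -/
structure Clone (A : Type) where
  ops : ∀ n : ℕ, Set (Op A n)
  proj_mem : ∀ (n : ℕ) (i : Fin (n + 1)), (fun x => x i) ∈ ops n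
  comp_mem : ∀ {m n : ℕ} (g : Op A m) (h : Fin (m + 1) → Op A n),
      g ∈ ops m → (∀ i, h i ∈ ops n) → (fun x => g fun i => h i x) ∈ ops n

/-- The set `O_A` of all finitary operations on `A`, of all arities. -/
def Ops (A : Type) := Σ n : ℕ, Op A n

/-- `Minor C f g` : `f` is a `C`-minor of `g`, i.e. `f = g ∘ h` for a tuple `h`
of operations from `C`. -/
def Minor {A : Type} (C : Clone A) (f g : Ops A) : Prop :=
  ∃ h : Fin (g.1 + 1) → Op A f.1,
    (∀ i, h i ∈ C.ops f.1) ∧ f.2 = fun x => g.2 fun i => h i x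

/-- `C`-equivalence: each of `f`, `g` is a `C`-minor of the other. -/
def CEquiv {A : Type} (C : Clone A) (f g : Ops A) : Prop :=
  Minor C f g ∧ Minor C g f

/-- `Im^[2](f)`: the collection of sets `{f(a), f(ā)}` where `ā` is the
componentwise complement of `a`. -/
def Im2 (f : Ops (Fin 2)) : Set (Set (Fin 2)) :=
  {s | ∃ a : Fin (f.1 + 1) → Fin 2, s = {f.2 a, f.2 (fun i => a i + 1)}}


-- helpers
lemma add11 : ∀ a : Fin 2, a + 1 + 1 = a := by decide

lemma tc : ∀ a : Fin 2, a = 0 ∨ a = 1 := by decide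

lemma pair_eq (s t u : Fin 2) : ({s} : Set (Fin 2)) = {t, u} ↔ t = s ∧ u = s := by
  constructor
  · intro h
    have ht : t ∈ ({s} : Set (Fin 2)) := by rw [h]; exact Set.mem_insert _ _
    have hu : u ∈ ({s} : Set (Fin 2)) := by rw [h]; simp
    exact ⟨ht, hu⟩
  · rintro ⟨rfl, rfl⟩; simp

lemma pair01 (t u : Fin 2) :
    ({0, 1} : Set (Fin 2)) = {t, u} ↔ (t = 0 ∧ u = 1) ∨ (t = 1 ∧ u = 0) := by
  constructor
  · intro h
    have h0 : (0 : Fin 2) ∈ ({t, u} : Set (Fin 2)) := by rw [← h]; simp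
    have h1 : (1 : Fin 2) ∈ ({t, u} : Set (Fin 2)) := by rw [← h]; simp
    simp only [Set.mem_insert_iff, Set.mem_singleton_iff] at h0 h1
    rcases h0 with h0 | h0 <;> rcases h1 with h1 | h1 <;>
      first
        | (exact absurd (h1.trans h0.symm) (by decide))
        | tauto
  · rintro (⟨rfl, rfl⟩ | ⟨rfl, rfl⟩)
    · rfl
    · exact Set.pair_comm 0 1

lemma align (u v p q : Fin 2) (h : ({u, v} : Set (Fin 2)) = {p, q}) :
    (p = u ∧ q = v) ∨ (p = v ∧ q = u) := by
  have hp : p ∈ ({u, v} : Set (Fin 2)) := by rw [h]; simp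
  have hq : q ∈ ({u, v} : Set (Fin 2)) := by rw [h]; simp
  have hu : u ∈ ({p, q} : Set (Fin 2)) := by rw [← h]; simp
  have hv : v ∈ ({p, q} : Set (Fin 2)) := by rw [← h]; simp
  simp only [Set.mem_insert_iff, Set.mem_singleton_iff] at hp hq hu hv
  clear h
  revert hp hq hu hv
  revert u v p q
  decide

section Main
variable {S : Clone (Fin 2)}
  (hS : ∀ n, S.ops n =
    {f : Op (Fin 2) n | ∀ x, f (fun i => x i + 1) = f x + 1})

include hS

lemma minor_iff (f g : Ops (Fin 2)) : Minor S f g ↔ Im2 f ⊆ Im2 g := by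
  constructor
  · rintro ⟨h, hmem, hf⟩ s ⟨a, rfl⟩
    have hd : ∀ i x, h i (fun j => x j + 1) = h i x + 1 := by
      intro i
      have := hmem i
      rw [hS] at this
      exact this
    refine ⟨fun i => h i a, ?_⟩
    have e1 : f.2 a = g.2 (fun i => h i a) := by rw [hf]
    have e2 : f.2 (fun i => a i + 1) = g.2 (fun i => h i a + 1) := by
      rw [hf]; simp only [hd]
    rw [e1, e2]
  · intro hsub
    have key : ∀ x : Fin (f.1 + 1) → Fin 2, ∃ b : Fin (g.1 + 1) → Fin 2,
        g.2 b = f.2 x ∧ g.2 (fun i => b i + 1) = f.2 (fun i => x i + 1) := by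
      intro x
      obtain ⟨a, ha⟩ := hsub ⟨x, rfl⟩
      rcases align _ _ _ _ ha with ⟨h1, h2⟩ | ⟨h1, h2⟩
      · exact ⟨a, h1, h2⟩
      · refine ⟨fun i => a i + 1, h2, ?_⟩
        have : (fun i => (a i + 1) + 1) = a := funext fun i => add11 _
        rw [show (fun i => (fun j => a j + 1) i + 1) = a from this]
        exact h1
    choose c hc1 hc2 using key
    refine ⟨fun i x => if x 0 = 0 then c x i else c (fun j => x j + 1) i + 1, ?_, ?_⟩
    · intro i
      rw [hS]
      intro x
      simp only
      rcases tc (x 0) with h | h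
      · have h' : x 0 + 1 ≠ 0 := by rw [h]; decide
        rw [if_pos h, if_neg h']
        simp only [add11]
      · have h' : x 0 + 1 = 0 := by rw [h]; decide
        have h'' : x 0 ≠ 0 := by rw [h]; decide
        rw [if_pos h', if_neg h'']
        simp only [add11]
    · funext x
      simp only
      rcases tc (x 0) with h | h
      · simp only [if_pos h]
        exact (hc1 x).symm
      · have h'' : x 0 ≠ 0 := by rw [h]; decide
        simp only [if_neg h'']
        have := hc2 (fun j => x j + 1)
        simp only [add11] at this
        exact this.symm

end Main

attribute [local instance] Classical.propDecidable

noncomputable def theta (f : Ops (Fin 2)) : Bool × Bool × Bool :=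
  (decide (({0} : Set (Fin 2)) ∈ Im2 f), decide (({1} : Set (Fin 2)) ∈ Im2 f),
    decide (({0, 1} : Set (Fin 2)) ∈ Im2 f))

lemma dec_eq {p : Prop} [Decidable p] {b : Bool} (h : p ↔ b = true) : decide p = b := by
  cases b
  · rw [decide_eq_false_iff_not]; simp [h]
  · rw [decide_eq_true_eq]; simp [h]

lemma theta_spec (f : Ops (Fin 2)) {b1 b2 b3 : Bool}
    (h1 : ({0} : Set (Fin 2)) ∈ Im2 f ↔ b1 = true)
    (h2 : ({1} : Set (Fin 2)) ∈ Im2 f ↔ b2 = true)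
    (h3 : ({0, 1} : Set (Fin 2)) ∈ Im2 f ↔ b3 = true) :
    theta f = (b1, b2, b3) := by
  simp only [theta, Prod.mk.injEq]
  exact ⟨dec_eq h1, dec_eq h2, dec_eq h3⟩

lemma im2_sub (f : Ops (Fin 2)) :
    ∀ s ∈ Im2 f, s = {0} ∨ s = {1} ∨ s = ({0, 1} : Set (Fin 2)) := by
  rintro s ⟨a, rfl⟩
  rcases tc (f.2 a) with h | h <;> rcases tc (f.2 (fun i => a i + 1)) with h' | h' <;>
    rw [h, h'] <;>
    first
      | exact Or.inl (Set.pair_eq_singleton 0)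
      | exact Or.inr (Or.inl (Set.pair_eq_singleton 1))
      | exact Or.inr (Or.inr rfl)
      | exact Or.inr (Or.inr (Set.pair_comm 1 0))

lemma theta_ne (f : Ops (Fin 2)) : theta f ≠ (false, false, false) := by
  intro h
  have h1 : ¬ (({0} : Set (Fin 2)) ∈ Im2 f) := of_decide_eq_false (congrArg Prod.fst h)
  have h2 : ¬ (({1} : Set (Fin 2)) ∈ Im2 f) :=
    of_decide_eq_false (congrArg (fun p => p.2.1) h)
  have h3 : ¬ (({0, 1} : Set (Fin 2)) ∈ Im2 f) :=
    of_decide_eq_false (congrArg (fun p => p.2.2) h)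
  have hs : ({f.2 (fun _ => 0), f.2 (fun i => (fun _ => (0 : Fin 2)) i + 1)} : Set (Fin 2)) ∈ Im2 f :=
    ⟨fun _ => 0, rfl⟩
  rcases im2_sub f _ hs with h' | h' | h' <;> rw [h'] at hs
  · exact h1 hs
  · exact h2 hs
  · exact h3 hs

lemma theta_inj {f g : Ops (Fin 2)} (h : theta f = theta g) : Im2 f = Im2 g := by
  have e1 : (({0} : Set (Fin 2)) ∈ Im2 f) ↔ (({0} : Set (Fin 2)) ∈ Im2 g) :=
    decide_eq_decide.mp (congrArg Prod.fst h)
  have e2 : (({1} : Set (Fin 2)) ∈ Im2 f) ↔ (({1} : Set (Fin 2)) ∈ Im2 g) :=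
    decide_eq_decide.mp (congrArg (fun p => p.2.1) h)
  have e3 : (({0, 1} : Set (Fin 2)) ∈ Im2 f) ↔ (({0, 1} : Set (Fin 2)) ∈ Im2 g) :=
    decide_eq_decide.mp (congrArg (fun p => p.2.2) h)
  ext s
  constructor
  · intro hs
    rcases im2_sub f s hs with rfl | rfl | rfl
    · exact e1.mp hs
    · exact e2.mp hs
    · exact e3.mp hs
  · intro hs
    rcases im2_sub g s hs with rfl | rfl | rfl
    · exact e1.mpr hs
    · exact e2.mpr hs
    · exact e3.mpr hs

def F1 : Ops (Fin 2) := ⟨0, fun _ => 0⟩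
def F2 : Ops (Fin 2) := ⟨0, fun _ => 1⟩
def F3 : Ops (Fin 2) := ⟨0, fun x => x 0⟩
def F4 : Ops (Fin 2) := ⟨1, fun x => min (x 0) (x 1)⟩
def F5 : Ops (Fin 2) := ⟨1, fun x => max (x 0) (x 1)⟩
def F6 : Ops (Fin 2) := ⟨1, fun x => x 0 + x 1⟩
def F7 : Ops (Fin 2) :=
  ⟨2, fun x => if x 0 = x 1 then (if x 1 = x 2 then x 0 else 0) else (if x 1 = x 2 then 1 else 0)⟩

lemma t1 : theta F1 = (true, false, false) := by
  refine theta_spec _ (iff_of_true ⟨fun _ => 0, by rw [pair_eq]; exact ⟨rfl, rfl⟩⟩ rfl)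
    (iff_of_false ?_ (by decide)) (iff_of_false ?_ (by decide))
  · rintro ⟨a, ha⟩; rw [pair_eq] at ha; simp only [F1] at ha; exact absurd ha (by decide)
  · rintro ⟨a, ha⟩; rw [pair01] at ha; simp only [F1] at ha; exact absurd ha (by decide)

lemma t2 : theta F2 = (false, true, false) := by
  refine theta_spec _ (iff_of_false ?_ (by decide))
    (iff_of_true ⟨fun _ => 0, by rw [pair_eq]; exact ⟨rfl, rfl⟩⟩ rfl)
    (iff_of_false ?_ (by decide))
  · rintro ⟨a, ha⟩; rw [pair_eq] at ha; simp only [F2] at ha; exact absurd ha (by decide)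
  · rintro ⟨a, ha⟩; rw [pair01] at ha; simp only [F2] at ha; exact absurd ha (by decide)

lemma t3 : theta F3 = (false, false, true) := by
  refine theta_spec _ (iff_of_false ?_ (by decide)) (iff_of_false ?_ (by decide))
    (iff_of_true ⟨fun _ => 0, by rw [pair01]; exact Or.inl ⟨rfl, rfl⟩⟩ rfl)
  all_goals
    rintro ⟨a, ha⟩; rw [pair_eq] at ha; simp only [F3] at ha
    rcases tc (a (0 : Fin (0+1))) with h | h <;> rw [h] at ha <;> exact absurd ha (by decide)

lemma t4 : theta F4 = (true, false, true) := by
  refine theta_spec _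
    (iff_of_true ⟨![0, 1], by rw [pair_eq]; decide⟩ rfl)
    (iff_of_false ?_ (by decide))
    (iff_of_true ⟨![0, 0], by rw [pair01]; decide⟩ rfl)
  rintro ⟨a, ha⟩; rw [pair_eq] at ha; simp only [F4] at ha
  rcases tc (a (0 : Fin (1+1))) with h | h <;> rcases tc (a (1 : Fin (1+1))) with h' | h' <;>
    rw [h, h'] at ha <;> exact absurd ha (by decide)

lemma t5 : theta F5 = (false, true, true) := by
  refine theta_spec _
    (iff_of_false ?_ (by decide))
    (iff_of_true ⟨![0, 1], by rw [pair_eq]; decide⟩ rfl)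
    (iff_of_true ⟨![0, 0], by rw [pair01]; decide⟩ rfl)
  rintro ⟨a, ha⟩; rw [pair_eq] at ha; simp only [F5] at ha
  rcases tc (a (0 : Fin (1+1))) with h | h <;> rcases tc (a (1 : Fin (1+1))) with h' | h' <;>
    rw [h, h'] at ha <;> exact absurd ha (by decide)

lemma t6 : theta F6 = (true, true, false) := by
  refine theta_spec _
    (iff_of_true ⟨![0, 0], by rw [pair_eq]; decide⟩ rfl)
    (iff_of_true ⟨![0, 1], by rw [pair_eq]; decide⟩ rfl)
    (iff_of_false ?_ (by decide))
  rintro ⟨a, ha⟩; rw [pair01] at ha; simp only [F6] at ha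
  rcases tc (a (0 : Fin (1+1))) with h | h <;> rcases tc (a (1 : Fin (1+1))) with h' | h' <;>
    rw [h, h'] at ha <;> exact absurd ha (by decide)

lemma t7 : theta F7 = (true, true, true) :=
  theta_spec _
    (iff_of_true ⟨![0, 0, 1], by rw [pair_eq]; decide⟩ rfl)
    (iff_of_true ⟨![0, 1, 1], by rw [pair_eq]; decide⟩ rfl)
    (iff_of_true ⟨![0, 0, 0], by rw [pair01]; decide⟩ rfl)

theorem selfdual_minor_description {S : Clone (Fin 2)}
    (hS : ∀ n, S.ops n =
      {f : Op (Fin 2) n | ∀ x, f (fun i => x i + 1) = f x + 1}) :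
    (∀ f g : Ops (Fin 2), Minor S f g ↔ Im2 f ⊆ Im2 g) ∧
    Nat.card (Quot (CEquiv S)) = 7 := by
  refine ⟨fun f g => minor_iff hS f g, ?_⟩
  have hresp : ∀ f g : Ops (Fin 2), CEquiv S f g →
      (⟨theta f, theta_ne f⟩ : {v : Bool × Bool × Bool // v ≠ (false, false, false)}) =
        ⟨theta g, theta_ne g⟩ := by
    intro f g ⟨m1, m2⟩
    have him : Im2 f = Im2 g :=
      subset_antisymm ((minor_iff hS f g).mp m1) ((minor_iff hS g f).mp m2)
    exact Subtype.ext (by simp only [theta, him])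
  have e : Quot (CEquiv S) ≃ {v : Bool × Bool × Bool // v ≠ (false, false, false)} := by
    refine Equiv.ofBijective (Quot.lift (fun f => ⟨theta f, theta_ne f⟩) hresp) ⟨?_, ?_⟩
    · intro q1 q2
      induction q1 using Quot.ind with | _ f => ?_
      induction q2 using Quot.ind with | _ g => ?_
      intro h
      have ht : theta f = theta g := Subtype.ext_iff.mp h
      have him : Im2 f = Im2 g := theta_inj ht
      exact Quot.sound ⟨(minor_iff hS f g).mpr him.le, (minor_iff hS g f).mpr him.ge⟩
    · rintro ⟨⟨b1, b2, b3⟩, hv⟩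
      cases b1 <;> cases b2 <;> cases b3
      · exact absurd rfl hv
      · exact ⟨Quot.mk _ F3, Subtype.ext t3⟩
      · exact ⟨Quot.mk _ F2, Subtype.ext t2⟩
      · exact ⟨Quot.mk _ F5, Subtype.ext t5⟩
      · exact ⟨Quot.mk _ F1, Subtype.ext t1⟩
      · exact ⟨Quot.mk _ F4, Subtype.ext t4⟩
      · exact ⟨Quot.mk _ F6, Subtype.ext t6⟩
      · exact ⟨Quot.mk _ F7, Subtype.ext t7⟩
  rw [Nat.card_congr e, Nat.card_eq_fintype_card]
  decide
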